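/- Let v_1,…,v_n be lattice points lying on a common affine hyperplane {deg = 1} in a lattice N of rank r. Suppose (Ψ_d)_{d∈C°} is a collection of functions of (x_1,…,x_n) satisfying ∂_i Ψ_d = Ψ_{d+v_i} and ∑_{i=1}^n ⟨m, v_i⟩ x_i ∂_i Ψ_d + ⟨m, d⟩ Ψ_d = 0 for all m ∈ N^∨ and all d in the interior of the cone C generated by the v_i. Then the function ∑_{|I|=r} Vol_I² (∏_{i∈I} x_i) Ψ_{∑_{i∈I} v_i} is constant in (x_1,…,x_n), where Vol_I is the determinant of (v_i)_{i∈I} and the sum runs over r-element subsets I with ∑_{i∈I}v_i ∈ C°. -/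

import Mathlib

open scoped BigOperators

/-- The interior of the real cone generated by the lattice vectors `v i`. -/
def intCone {n r : ℕ} (v : Fin n → (Fin r → ℤ)) : Set (Fin r → ℝ) :=
  interior {x | ∃ a : Fin n → ℝ, (∀ i, 0 ≤ a i) ∧
    x = ∑ i, a i • (fun k => (v i k : ℝ))}

namespace Stmt10Aux

variable {n r : ℕ}

/-- The (not necessarily closed) cone generated by the `v i`. -/
def coneSet (v : Fin n → (Fin r → ℤ)) : Set (Fin r → ℝ) :=
  {x | ∃ a : Fin n → ℝ, (∀ i, 0 ≤ a i) ∧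
    x = ∑ i, a i • (fun k => (v i k : ℝ))}

lemma intCone_eq (v : Fin n → (Fin r → ℤ)) : intCone v = interior (coneSet v) := rfl

/-- Integer matrix with columns `v (f b)`. -/
def VmZ (v : Fin n → (Fin r → ℤ)) (f : Fin r → Fin n) : Matrix (Fin r) (Fin r) ℤ :=
  Matrix.of fun a b => v (f b) a

/-- Real matrix with columns `v (f b)`. -/
def Vm (v : Fin n → (Fin r → ℤ)) (f : Fin r → Fin n) : Matrix (Fin r) (Fin r) ℝ :=
  Matrix.of fun a b => (v (f b) a : ℝ)

lemma det_cast (v : Fin n → (Fin r → ℤ)) (f : Fin r → Fin n) :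
    ((VmZ v f).det : ℝ) = (Vm v f).det := by
  have h := RingHom.map_det (Int.castRingHom ℝ) (VmZ v f)
  have h2 : ((Int.castRingHom ℝ).mapMatrix (VmZ v f)) = Vm v f := by
    ext a b; rfl
  rw [h2] at h
  exact h

lemma VmZ_update (v : Fin n → (Fin r → ℤ)) (f : Fin r → Fin n) (b : Fin r) (i : Fin n) :
    VmZ v (Function.update f b i) = (VmZ v f).updateCol b (v i) := by
  ext a c
  by_cases h : c = b <;>
    simp [VmZ, Matrix.updateCol_apply, Function.update_apply, h]

lemma Vm_update (v : Fin n → (Fin r → ℤ)) (f : Fin r → Fin n) (b : Fin r) (i : Fin n) :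
    Vm v (Function.update f b i) = (Vm v f).updateCol b (fun a => (v i a : ℝ)) := by
  ext a c
  by_cases h : c = b <;>
    simp [Vm, Matrix.updateCol_apply, Function.update_apply, h]

/-- The cramer pairing: pairing the cofactor vector against `w` gives the determinant of the
matrix with column `b` replaced by `w`. -/
lemma pair_det (v : Fin n → (Fin r → ℤ)) (f : Fin r → Fin n) (b : Fin r) (w : Fin r → ℤ) :
    ∑ k, ((VmZ v f).updateCol b (Pi.single k 1)).det * w k
      = ((VmZ v f).updateCol b w).det := by
  have hw : w = ∑ k, Pi.single k (w k) := (Finset.univ_sum_single w).symm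
  calc ∑ k, ((VmZ v f).updateCol b (Pi.single k 1)).det * w k
      = ∑ k, (Matrix.cramer (VmZ v f) (Pi.single k (w k))) b := by
        refine Finset.sum_congr rfl fun k _ => ?_
        have h1 : Pi.single k (w k) = w k • (Pi.single k (1 : ℤ) : Fin r → ℤ) := by
          funext a; by_cases h : a = k <;> simp [Pi.single_apply, h]
        rw [h1, map_smul]
        simp [Matrix.cramer_apply, mul_comm]
    _ = (Matrix.cramer (VmZ v f) (∑ k, Pi.single k (w k))) b := by
        rw [map_sum]; simp
    _ = ((VmZ v f).updateCol b w).det := by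
        rw [← hw, Matrix.cramer_apply]

/-- Pairing the cofactor vector against the sum of the columns gives back the determinant. -/
lemma pair_det_self (v : Fin n → (Fin r → ℤ)) (f : Fin r → Fin n) (b : Fin r) :
    ∑ k, ((VmZ v f).updateCol b (Pi.single k 1)).det * (∑ b', v (f b')) k
      = (VmZ v f).det := by
  rw [pair_det]
  calc ((VmZ v f).updateCol b (∑ b', v (f b'))).det
      = (Matrix.cramer (VmZ v f) (∑ b', v (f b'))) b := (Matrix.cramer_apply _ _ _).symm
    _ = ∑ b', (Matrix.cramer (VmZ v f) (v (f b'))) b := by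
        rw [map_sum]; simp
    _ = (VmZ v f).det := by
        rw [Finset.sum_eq_single b]
        · rw [Matrix.cramer_apply]
          have h : v (f b) = fun a => (VmZ v f) a b := rfl
          rw [h, Matrix.updateCol_eq_self]
        · intro b' _ hb'
          rw [Matrix.cramer_apply]
          have h : v (f b') = fun a => (VmZ v f) a b' := rfl
          rw [h]
          exact Matrix.det_updateCol_eq_zero hb'
        · simp

/-- Sum over columns of replacing a column by `w` gives back the determinant, when all
columns and `w` pair to `1` against a fixed functional `m0R`. -/
lemma sum_det_update (A : Matrix (Fin r) (Fin r) ℝ) (m0R w : Fin r → ℝ)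
    (hcol : ∀ b, ∑ k, m0R k * A k b = 1) (hw : ∑ k, m0R k * w k = 1) :
    ∑ b, (A.updateCol b w).det = A.det := by
  have h2 : ∀ b, Matrix.vecMul m0R A b = 1 := by
    intro b
    have h : Matrix.vecMul m0R A b = ∑ k, m0R k * A k b := by
      simp [Matrix.vecMul, dotProduct]
    rw [h, hcol b]
  have h1 : dotProduct (Matrix.vecMul m0R A) (Matrix.cramer A w)
      = dotProduct m0R (A.det • w) := by
    rw [← Matrix.dotProduct_mulVec, Matrix.mulVec_cramer]
  simp only [dotProduct, h2, one_mul, Pi.smul_apply, smul_eq_mul] at h1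
  calc ∑ b, (A.updateCol b w).det
      = ∑ b, (Matrix.cramer A w) b := by simp [Matrix.cramer_apply]
    _ = ∑ k, m0R k * (A.det * w k) := h1
    _ = A.det * ∑ k, m0R k * w k := by
        rw [Finset.mul_sum]; exact Finset.sum_congr rfl fun k _ => by ring
    _ = A.det := by rw [hw, mul_one]

/-- Adding a generator keeps us in the cone. -/
lemma coneSet_add (v : Fin n → (Fin r → ℤ)) {d : Fin r → ℝ} (hd : d ∈ coneSet v) (j : Fin n) :
    (d + fun k => (v j k : ℝ)) ∈ coneSet v := by
  obtain ⟨a, ha, rfl⟩ := hd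
  refine ⟨a + Pi.single j 1, fun i => ?_, ?_⟩
  · refine add_nonneg (ha i) ?_
    by_cases h : i = j <;> simp [Pi.single_apply, h]
  · simp only [Pi.add_apply, add_smul, Finset.sum_add_distrib]
    congr 1
    rw [Finset.sum_eq_single j]
    · simp
    · intro i _ hi; simp [Pi.single_apply, hi]
    · simp

/-- Adding a generator keeps us in the interior of the cone. -/
lemma intCone_add (v : Fin n → (Fin r → ℤ)) {d : Fin r → ℤ}
    (hd : (fun k => (d k : ℝ)) ∈ intCone v) (j : Fin n) :
    (fun k => ((d + v j) k : ℝ)) ∈ intCone v := by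
  have h1 : (fun k => ((d + v j) k : ℝ)) = ((fun k => (d k : ℝ)) + fun k => (v j k : ℝ)) := by
    funext k; simp
  have h2 : (fun k => (d k : ℝ)) + (fun k => (v j k : ℝ))
      ∈ ⇑(Homeomorph.addRight (fun k => (v j k : ℝ))) '' interior (coneSet v) :=
    ⟨_, hd, rfl⟩
  rw [Homeomorph.image_interior] at h2
  have h3 : ⇑(Homeomorph.addRight (fun k => (v j k : ℝ))) '' coneSet v ⊆ coneSet v := by
    rintro _ ⟨z, hz, rfl⟩
    exact coneSet_add v hz j
  rw [intCone_eq, h1]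
  exact interior_mono h3 h2

/-- If the determinant is nonzero, the sum of the corresponding generators is in the interior
of the cone. -/
lemma mem_intCone_det (v : Fin n → (Fin r → ℤ)) (f : Fin r → Fin n)
    (hdet : (VmZ v f).det ≠ 0) :
    (fun k => (((∑ b, v (f b)) : Fin r → ℤ) k : ℝ)) ∈ intCone v := by
  classical
  have hdetR : (Vm v f).det ≠ 0 := by
    rw [← det_cast]; exact_mod_cast hdet
  have hu : IsUnit (Vm v f).det := isUnit_iff_ne_zero.mpr hdetR
  have hinv : Invertible (Vm v f) := (Vm v f).invertibleOfIsUnitDet hu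
  let e : (Fin r → ℝ) ≃ₗ[ℝ] (Fin r → ℝ) := Matrix.toLinearEquiv' (Vm v f) hinv
  let eC : (Fin r → ℝ) ≃L[ℝ] (Fin r → ℝ) := e.toContinuousLinearEquiv
  have heC : ∀ c, eC c = (Vm v f).mulVec c := by
    intro c
    show (Matrix.toLinearEquiv' (Vm v f) hinv) c = _
    rfl
  have hUopen : IsOpen {c : Fin r → ℝ | ∀ b, 0 < c b} := by
    have h : {c : Fin r → ℝ | ∀ b, 0 < c b}
        = Set.pi Set.univ (fun _ : Fin r => Set.Ioi (0:ℝ)) := by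
      ext c; simp [Set.mem_pi]
    rw [h]
    exact isOpen_set_pi Set.finite_univ fun _ _ => isOpen_Ioi
  have hmaps : ⇑eC '' {c : Fin r → ℝ | ∀ b, 0 < c b} ⊆ coneSet v := by
    rintro _ ⟨c, hc, rfl⟩
    refine ⟨fun i => ∑ b, if f b = i then c b else 0,
      fun i => Finset.sum_nonneg fun b _ => by split <;> simp [le_of_lt, hc b], ?_⟩
    rw [heC]
    funext k
    calc (Vm v f).mulVec c k
        = ∑ b, (v (f b) k : ℝ) * c b := by
          simp [Matrix.mulVec, dotProduct, Vm]
      _ = ∑ b, ∑ i, (if f b = i then c b * (v i k : ℝ) else 0) := by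
          refine Finset.sum_congr rfl fun b _ => ?_
          rw [Finset.sum_ite_eq]
          simp [mul_comm]
      _ = ∑ i, ∑ b, (if f b = i then c b * (v i k : ℝ) else 0) := Finset.sum_comm
      _ = ∑ i, (∑ b, if f b = i then c b else 0) * (v i k : ℝ) := by
          refine Finset.sum_congr rfl fun i _ => ?_
          rw [Finset.sum_mul]
          refine Finset.sum_congr rfl fun b _ => ?_
          split <;> simp
      _ = (∑ i, (∑ b, if f b = i then c b else 0) • (fun k' => (v i k' : ℝ))) k := by
          rw [Finset.sum_apply]
          simp
  have hmem : (fun k => (((∑ b, v (f b)) : Fin r → ℤ) k : ℝ))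
      ∈ ⇑eC '' {c : Fin r → ℝ | ∀ b, 0 < c b} := by
    refine ⟨fun _ => 1, fun b => one_pos, ?_⟩
    rw [heC]
    funext k
    simp [Matrix.mulVec, dotProduct, Vm, Finset.sum_apply]
  rw [intCone_eq]
  exact interior_maximal hmaps (eC.toHomeomorph.isOpenMap _ hUopen) hmem

/-- The summand of the function-indexed form of the Hessian pairing. -/
def Phi (v : Fin n → (Fin r → ℤ)) (Ψ : (Fin r → ℤ) → (Fin n → ℝ) → ℝ)
    (x : Fin n → ℝ) (f : Fin r → Fin n) : ℝ :=
  ((VmZ v f).det : ℝ)^2 * ((∏ b, x (f b)) * Ψ (∑ b, v (f b)) x)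

lemma Phi_def (v : Fin n → (Fin r → ℤ)) (Ψ : (Fin r → ℤ) → (Fin n → ℝ) → ℝ)
    (x : Fin n → ℝ) (f : Fin r → Fin n) :
    Phi v Ψ x f = ((VmZ v f).det : ℝ)^2 * ((∏ b, x (f b)) * Ψ (∑ b, v (f b)) x) := rfl

/-- The function-indexed form of the Hessian pairing. -/
def GG (v : Fin n → (Fin r → ℤ)) (Ψ : (Fin r → ℤ) → (Fin n → ℝ) → ℝ)
    (x : Fin n → ℝ) : ℝ :=
  ∑ f : Fin r → Fin n, ((VmZ v f).det : ℝ)^2 * ((∏ b, x (f b)) * Ψ (∑ b, v (f b)) x)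

lemma GG_phi (v : Fin n → (Fin r → ℤ)) (Ψ : (Fin r → ℤ) → (Fin n → ℝ) → ℝ)
    (x : Fin n → ℝ) : GG v Ψ x = ∑ f : Fin r → Fin n, Phi v Ψ x f := rfl

/-- The derivative of a single term of `GG` in the direction `j`. -/
def Dterm (v : Fin n → (Fin r → ℤ)) (Ψ : (Fin r → ℤ) → (Fin n → ℝ) → ℝ)
    (j : Fin n) (x : Fin n → ℝ) (f : Fin r → Fin n) : ℝ :=
  ((VmZ v f).det : ℝ)^2 *
    ((∑ b, (∏ b' ∈ Finset.univ.erase b, x (f b')) * (if f b = j then (1:ℝ) else 0)) *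
        Ψ (∑ b, v (f b)) x
      + (∏ b, x (f b)) * Ψ ((∑ b, v (f b)) + v j) x)

lemma hasDerivAt_term (v : Fin n → (Fin r → ℤ)) (Ψ : (Fin r → ℤ) → (Fin n → ℝ) → ℝ)
    (hder : ∀ d : Fin r → ℤ, (fun k => (d k : ℝ)) ∈ intCone v →
      ∀ i : Fin n, ∀ x : Fin n → ℝ,
        HasDerivAt (fun t => Ψ d (Function.update x i t)) (Ψ (d + v i) x) (x i))
    (j : Fin n) (x : Fin n → ℝ) (f : Fin r → Fin n) :
    HasDerivAt (fun t => ((VmZ v f).det : ℝ)^2 *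
        ((∏ b, Function.update x j t (f b)) * Ψ (∑ b, v (f b)) (Function.update x j t)))
      (Dterm v Ψ j x f) (x j) := by
  by_cases hdet : (VmZ v f).det = 0
  · rw [Dterm, hdet]
    simpa using hasDerivAt_const (x j) (0:ℝ)
  · have hcone := mem_intCone_det v f hdet
    have hΨ := hder (∑ b, v (f b)) hcone j x
    have hP : HasDerivAt (fun t => ∏ b, Function.update x j t (f b))
        (∑ b, (∏ b' ∈ Finset.univ.erase b, x (f b')) * (if f b = j then (1:ℝ) else 0))
        (x j) := by
      have h := HasDerivAt.fun_finsetProd (u := (Finset.univ : Finset (Fin r)))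
        (f := fun b t => Function.update x j t (f b))
        (f' := fun b => if f b = j then (1:ℝ) else 0) (x := x j) ?_
      · simpa [Function.update_eq_self, smul_eq_mul] using h
      · intro b _
        show HasDerivAt (fun t => Function.update x j t (f b))
          (if f b = j then (1:ℝ) else 0) (x j)
        by_cases hb : f b = j
        · rw [if_pos hb]
          have hfun : (fun t : ℝ => Function.update x j t (f b)) = fun t : ℝ => t := by
            funext t; rw [hb, Function.update_self]
          rw [hfun]
          exact hasDerivAt_id (x j)
        · rw [if_neg hb]
          have hfun : (fun t : ℝ => Function.update x j t (f b)) = fun _ : ℝ => x (f b) := by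
            funext t; rw [Function.update_of_ne hb]
          rw [hfun]
          exact hasDerivAt_const (x j) (x (f b))
    have h := (hP.mul hΨ).const_mul (((VmZ v f).det : ℝ)^2)
    rw [Dterm]
    simpa [Function.update_eq_self] using h

/-- The pointwise Euler identity multiplied by the determinant. -/
lemma euler_key (v : Fin n → (Fin r → ℤ)) (Ψ : (Fin r → ℤ) → (Fin n → ℝ) → ℝ)
    (hEuler : ∀ d : Fin r → ℤ, (fun k => (d k : ℝ)) ∈ intCone v →
      ∀ m : Fin r → ℤ, ∀ x : Fin n → ℝ,
        (∑ i, ((∑ k, m k * v i k : ℤ) : ℝ) * x i * Ψ (d + v i) x) +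
          ((∑ k, m k * d k : ℤ) : ℝ) * Ψ d x = 0)
    (x : Fin n → ℝ) (f : Fin r → Fin n) (b : Fin r) :
    ((VmZ v f).det : ℝ) *
      ((∑ i, ((VmZ v (Function.update f b i)).det : ℝ) * x i * Ψ ((∑ b', v (f b')) + v i) x)
        + ((VmZ v f).det : ℝ) * Ψ (∑ b', v (f b')) x) = 0 := by
  by_cases hdet : (VmZ v f).det = 0
  · rw [hdet]; norm_num
  · have hcone := mem_intCone_det v f hdet
    have H := hEuler (∑ b', v (f b')) hcone
      (fun k => ((VmZ v f).updateCol b (Pi.single k 1)).det) x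
    have h1 : ∀ i : Fin n, (∑ k, ((VmZ v f).updateCol b (Pi.single k 1)).det * v i k)
        = (VmZ v (Function.update f b i)).det := by
      intro i; rw [pair_det, ← VmZ_update]
    have h2 : (∑ k, ((VmZ v f).updateCol b (Pi.single k 1)).det * (∑ b', v (f b')) k)
        = (VmZ v f).det := pair_det_self v f b
    simp only [h1, h2] at H
    rw [H, mul_zero]

/-- The sum over column positions of determinants where one generator is replaced by `v j`. -/
lemma sum_det_update_cast (v : Fin n → (Fin r → ℤ)) (m0 : Fin r → ℤ)
    (hdeg : ∀ i, ∑ k, m0 k * v i k = 1) (g : Fin r → Fin n) (j : Fin n) :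
    ∑ b, ((VmZ v (Function.update g b j)).det : ℝ) = ((VmZ v g).det : ℝ) := by
  have hdegR : ∀ i : Fin n, ∑ k, ((m0 k : ℝ)) * ((v i k : ℝ)) = 1 := by
    intro i
    have h : ((∑ k, m0 k * v i k : ℤ) : ℝ) = ∑ k, (m0 k : ℝ) * (v i k : ℝ) := by
      push_cast; rfl
    rw [← h, hdeg i]; norm_num
  calc ∑ b, ((VmZ v (Function.update g b j)).det : ℝ)
      = ∑ b, ((Vm v g).updateCol b (fun a => (v j a : ℝ))).det := by
        refine Finset.sum_congr rfl fun b _ => ?_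
        rw [det_cast, Vm_update]
    _ = (Vm v g).det := by
        refine sum_det_update _ (fun k => (m0 k : ℝ)) _ (fun b => ?_) (hdegR j)
        exact hdegR (g b)
    _ = ((VmZ v g).det : ℝ) := (det_cast v g).symm

/-- Swapping the value at position `b` with the extra index is an involutive equivalence. -/
def swapEquiv (b : Fin r) : ((Fin r → Fin n) × Fin n) ≃ ((Fin r → Fin n) × Fin n) where
  toFun p := (Function.update p.1 b p.2, p.1 b)
  invFun p := (Function.update p.1 b p.2, p.1 b)
  left_inv p := by
    simp [Function.update_idem, Function.update_self, Function.update_eq_self, Prod.ext_iff]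
  right_inv p := by
    simp [Function.update_idem, Function.update_self, Function.update_eq_self, Prod.ext_iff]

lemma dsum_update (v : Fin n → (Fin r → ℤ)) (g : Fin r → Fin n) (b : Fin r) (c : Fin n) :
    (∑ b', v (Function.update g b c b')) + v (g b) = (∑ b', v (g b')) + v c := by
  have h1 : ∑ b', v (Function.update g b c b')
      = v c + ∑ b' ∈ Finset.univ.erase b, v (g b') := by
    rw [← Finset.add_sum_erase Finset.univ _ (Finset.mem_univ b)]
    congr 1
    · simp
    · exact Finset.sum_congr rfl fun b' hb' => by
        rw [Function.update_of_ne (Finset.ne_of_mem_erase hb')]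
  have h2 : ∑ b', v (g b') = v (g b) + ∑ b' ∈ Finset.univ.erase b, v (g b') :=
    (Finset.add_sum_erase Finset.univ _ (Finset.mem_univ b)).symm
  rw [h1, h2]; abel

/-- The reindexing step: the Euler cross terms at position `b` sum to the `j`-shifted terms. -/
lemma cross_sum (v : Fin n → (Fin r → ℤ)) (Ψ : (Fin r → ℤ) → (Fin n → ℝ) → ℝ)
    (j : Fin n) (x : Fin n → ℝ) (b : Fin r) :
    (∑ f : Fin r → Fin n, ∑ i : Fin n,
      (if f b = j then (1:ℝ) else 0) *
        ((∏ b' ∈ Finset.univ.erase b, x (f b')) *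
          (((VmZ v f).det : ℝ) *
            (((VmZ v (Function.update f b i)).det : ℝ) * x i * Ψ ((∑ b', v (f b')) + v i) x))))
    = ∑ g : Fin r → Fin n,
        ((VmZ v (Function.update g b j)).det : ℝ) *
          (((VmZ v g).det : ℝ) * ((∏ b', x (g b')) * Ψ ((∑ b', v (g b')) + v j) x)) := by
  classical
  set F : ((Fin r → Fin n) × Fin n) → ℝ := fun p =>
    (if p.1 b = j then (1:ℝ) else 0) *
      ((∏ b' ∈ Finset.univ.erase b, x (p.1 b')) *
        (((VmZ v p.1).det : ℝ) *
          (((VmZ v (Function.update p.1 b p.2)).det : ℝ) * x p.2 *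
            Ψ ((∑ b', v (p.1 b')) + v p.2) x))) with hF
  calc (∑ f : Fin r → Fin n, ∑ i : Fin n,
      (if f b = j then (1:ℝ) else 0) *
        ((∏ b' ∈ Finset.univ.erase b, x (f b')) *
          (((VmZ v f).det : ℝ) *
            (((VmZ v (Function.update f b i)).det : ℝ) * x i * Ψ ((∑ b', v (f b')) + v i) x))))
      = ∑ p : (Fin r → Fin n) × Fin n, F p := (Fintype.sum_prod_type (f := F)).symm
    _ = ∑ p : (Fin r → Fin n) × Fin n, F (swapEquiv b p) :=
        (Equiv.sum_comp (swapEquiv b) F).symm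
    _ = ∑ g : Fin r → Fin n, ∑ i' : Fin n, F (swapEquiv b (g, i')) :=
        Fintype.sum_prod_type (f := fun p => F (swapEquiv b p))
    _ = ∑ g : Fin r → Fin n,
        ((VmZ v (Function.update g b j)).det : ℝ) *
          (((VmZ v g).det : ℝ) * ((∏ b', x (g b')) * Ψ ((∑ b', v (g b')) + v j) x)) := by
        refine Finset.sum_congr rfl fun g _ => ?_
        have hterm : ∀ i' : Fin n, F (swapEquiv b (g, i'))
            = if i' = j then ((∏ b' ∈ Finset.univ.erase b, x (g b')) *
                (((VmZ v (Function.update g b i')).det : ℝ) *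
                  (((VmZ v g).det : ℝ) * x (g b) * Ψ ((∑ b', v (g b')) + v i') x)))
              else 0 := by
          intro i'
          have e2 : (∏ b' ∈ Finset.univ.erase b, x (Function.update g b i' b'))
              = ∏ b' ∈ Finset.univ.erase b, x (g b') :=
            Finset.prod_congr rfl fun b' hb' => by
              rw [Function.update_of_ne (Finset.ne_of_mem_erase hb')]
          have e3 : Function.update (Function.update g b i') b (g b) = g := by
            rw [Function.update_idem, Function.update_eq_self]
          have e4 := dsum_update v g b i'
          show (if Function.update g b i' b = j then (1:ℝ) else 0) *
              ((∏ b' ∈ Finset.univ.erase b, x (Function.update g b i' b')) *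
                (((VmZ v (Function.update g b i')).det : ℝ) *
                  (((VmZ v (Function.update (Function.update g b i') b (g b))).det : ℝ) *
                    x (g b) * Ψ ((∑ b', v (Function.update g b i' b')) + v (g b)) x))) = _
          rw [Function.update_self, e2, e3, e4, ite_mul, zero_mul, one_mul]
        rw [Finset.sum_congr rfl fun i' _ => hterm i', Finset.sum_ite_eq' Finset.univ j _]
        simp only [Finset.mem_univ, if_true]
        rw [← Finset.mul_prod_erase Finset.univ (fun b' => x (g b')) (Finset.mem_univ b)]
        ring

/-- The sum of the derivatives of all terms vanishes. -/
lemma sum_Dterm (v : Fin n → (Fin r → ℤ)) (m0 : Fin r → ℤ)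
    (hdeg : ∀ i, ∑ k, m0 k * v i k = 1)
    (Ψ : (Fin r → ℤ) → (Fin n → ℝ) → ℝ)
    (hEuler : ∀ d : Fin r → ℤ, (fun k => (d k : ℝ)) ∈ intCone v →
      ∀ m : Fin r → ℤ, ∀ x : Fin n → ℝ,
        (∑ i, ((∑ k, m k * v i k : ℤ) : ℝ) * x i * Ψ (d + v i) x) +
          ((∑ k, m k * d k : ℤ) : ℝ) * Ψ d x = 0)
    (j : Fin n) (x : Fin n → ℝ) :
    ∑ f : Fin r → Fin n, Dterm v Ψ j x f = 0 := by
  classical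
  -- split each derivative term
  have hsplit : ∀ f : Fin r → Fin n, Dterm v Ψ j x f
      = (∑ b, (if f b = j then (1:ℝ) else 0) *
          (((VmZ v f).det : ℝ)^2 *
            ((∏ b' ∈ Finset.univ.erase b, x (f b')) * Ψ (∑ b', v (f b')) x)))
        + ((VmZ v f).det : ℝ)^2 * ((∏ b', x (f b')) * Ψ ((∑ b', v (f b')) + v j) x) := by
    intro f
    rw [Dterm, mul_add]
    congr 1
    rw [Finset.sum_mul, Finset.mul_sum]
    exact Finset.sum_congr rfl fun b _ => by ring
  have hT : ∑ f : Fin r → Fin n, Dterm v Ψ j x f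
      = (∑ f : Fin r → Fin n, ∑ b, (if f b = j then (1:ℝ) else 0) *
          (((VmZ v f).det : ℝ)^2 *
            ((∏ b' ∈ Finset.univ.erase b, x (f b')) * Ψ (∑ b', v (f b')) x)))
        + ∑ f : Fin r → Fin n,
            ((VmZ v f).det : ℝ)^2 * ((∏ b', x (f b')) * Ψ ((∑ b', v (f b')) + v j) x) := by
    rw [← Finset.sum_add_distrib]
    exact Finset.sum_congr rfl fun f _ => hsplit f
  -- the key Euler identity, summed
  have hkey : ∀ b : Fin r, (∑ f : Fin r → Fin n,
      (if f b = j then (1:ℝ) else 0) *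
        ((∏ b' ∈ Finset.univ.erase b, x (f b')) *
          (((VmZ v f).det : ℝ) *
            ((∑ i, ((VmZ v (Function.update f b i)).det : ℝ) * x i * Ψ ((∑ b', v (f b')) + v i) x)
              + ((VmZ v f).det : ℝ) * Ψ (∑ b', v (f b')) x)))) = 0 := by
    intro b
    refine Finset.sum_eq_zero fun f _ => ?_
    rw [euler_key v Ψ hEuler x f b, mul_zero, mul_zero]
  -- split the Euler identity into the cross terms and the diagonal terms
  have hsplit2 : ∀ (b : Fin r) (f : Fin r → Fin n),
      (if f b = j then (1:ℝ) else 0) *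
        ((∏ b' ∈ Finset.univ.erase b, x (f b')) *
          (((VmZ v f).det : ℝ) *
            ((∑ i, ((VmZ v (Function.update f b i)).det : ℝ) * x i * Ψ ((∑ b', v (f b')) + v i) x)
              + ((VmZ v f).det : ℝ) * Ψ (∑ b', v (f b')) x)))
      = (∑ i : Fin n, (if f b = j then (1:ℝ) else 0) *
          ((∏ b' ∈ Finset.univ.erase b, x (f b')) *
            (((VmZ v f).det : ℝ) *
              (((VmZ v (Function.update f b i)).det : ℝ) * x i * Ψ ((∑ b', v (f b')) + v i) x))))
        + (if f b = j then (1:ℝ) else 0) *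
            (((VmZ v f).det : ℝ)^2 *
              ((∏ b' ∈ Finset.univ.erase b, x (f b')) * Ψ (∑ b', v (f b')) x)) := by
    intro b f
    simp only [mul_add, Finset.mul_sum]
    congr 1
    all_goals first
      | ring
      | exact Finset.sum_congr rfl fun i _ => by ring
  have hzero2 : (∑ b : Fin r, ∑ f : Fin r → Fin n, ∑ i : Fin n,
      (if f b = j then (1:ℝ) else 0) *
        ((∏ b' ∈ Finset.univ.erase b, x (f b')) *
          (((VmZ v f).det : ℝ) *
            (((VmZ v (Function.update f b i)).det : ℝ) * x i * Ψ ((∑ b', v (f b')) + v i) x))))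
    + (∑ b : Fin r, ∑ f : Fin r → Fin n,
      (if f b = j then (1:ℝ) else 0) *
        (((VmZ v f).det : ℝ)^2 *
          ((∏ b' ∈ Finset.univ.erase b, x (f b')) * Ψ (∑ b', v (f b')) x))) = 0 := by
    have h1 : ∀ b : Fin r, (∑ f : Fin r → Fin n, ∑ i : Fin n,
        (if f b = j then (1:ℝ) else 0) *
          ((∏ b' ∈ Finset.univ.erase b, x (f b')) *
            (((VmZ v f).det : ℝ) *
              (((VmZ v (Function.update f b i)).det : ℝ) * x i
                * Ψ ((∑ b', v (f b')) + v i) x))))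
      + (∑ f : Fin r → Fin n,
        (if f b = j then (1:ℝ) else 0) *
          (((VmZ v f).det : ℝ)^2 *
            ((∏ b' ∈ Finset.univ.erase b, x (f b')) * Ψ (∑ b', v (f b')) x))) = 0 := by
      intro b
      refine Eq.trans ?_ (hkey b)
      rw [← Finset.sum_add_distrib]
      exact Finset.sum_congr rfl fun f _ => (hsplit2 b f).symm
    calc (∑ b : Fin r, ∑ f : Fin r → Fin n, ∑ i : Fin n,
        (if f b = j then (1:ℝ) else 0) *
          ((∏ b' ∈ Finset.univ.erase b, x (f b')) *
            (((VmZ v f).det : ℝ) *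
              (((VmZ v (Function.update f b i)).det : ℝ) * x i
                * Ψ ((∑ b', v (f b')) + v i) x))))
      + (∑ b : Fin r, ∑ f : Fin r → Fin n,
        (if f b = j then (1:ℝ) else 0) *
          (((VmZ v f).det : ℝ)^2 *
            ((∏ b' ∈ Finset.univ.erase b, x (f b')) * Ψ (∑ b', v (f b')) x)))
        = ∑ b : Fin r, ((∑ f : Fin r → Fin n, ∑ i : Fin n,
            (if f b = j then (1:ℝ) else 0) *
              ((∏ b' ∈ Finset.univ.erase b, x (f b')) *
                (((VmZ v f).det : ℝ) *
                  (((VmZ v (Function.update f b i)).det : ℝ) * x i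
                    * Ψ ((∑ b', v (f b')) + v i) x))))
          + (∑ f : Fin r → Fin n,
            (if f b = j then (1:ℝ) else 0) *
              (((VmZ v f).det : ℝ)^2 *
                ((∏ b' ∈ Finset.univ.erase b, x (f b')) * Ψ (∑ b', v (f b')) x)))) :=
          Finset.sum_add_distrib.symm
      _ = ∑ b : Fin r, (0:ℝ) := Finset.sum_congr rfl fun b _ => h1 b
      _ = 0 := by simp
  -- identify the two pieces
  have hcross : ∑ b : Fin r, ∑ f : Fin r → Fin n, ∑ i : Fin n,
      (if f b = j then (1:ℝ) else 0) *
        ((∏ b' ∈ Finset.univ.erase b, x (f b')) *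
          (((VmZ v f).det : ℝ) *
            (((VmZ v (Function.update f b i)).det : ℝ) * x i * Ψ ((∑ b', v (f b')) + v i) x)))
      = ∑ f : Fin r → Fin n,
          ((VmZ v f).det : ℝ)^2 * ((∏ b', x (f b')) * Ψ ((∑ b', v (f b')) + v j) x) := by
    calc ∑ b : Fin r, ∑ f : Fin r → Fin n, ∑ i : Fin n,
        (if f b = j then (1:ℝ) else 0) *
          ((∏ b' ∈ Finset.univ.erase b, x (f b')) *
            (((VmZ v f).det : ℝ) *
              (((VmZ v (Function.update f b i)).det : ℝ) * x i * Ψ ((∑ b', v (f b')) + v i) x)))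
        = ∑ b : Fin r, ∑ g : Fin r → Fin n,
            ((VmZ v (Function.update g b j)).det : ℝ) *
              (((VmZ v g).det : ℝ) * ((∏ b', x (g b')) * Ψ ((∑ b', v (g b')) + v j) x)) :=
          Finset.sum_congr rfl fun b _ => cross_sum v Ψ j x b
      _ = ∑ g : Fin r → Fin n, ∑ b : Fin r,
            ((VmZ v (Function.update g b j)).det : ℝ) *
              (((VmZ v g).det : ℝ) * ((∏ b', x (g b')) * Ψ ((∑ b', v (g b')) + v j) x)) :=
          Finset.sum_comm
      _ = ∑ g : Fin r → Fin n,
            ((VmZ v g).det : ℝ)^2 * ((∏ b', x (g b')) * Ψ ((∑ b', v (g b')) + v j) x) := by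
          refine Finset.sum_congr rfl fun g _ => ?_
          rw [← Finset.sum_mul, sum_det_update_cast v m0 hdeg g j]
          ring
  rw [hT, ← hcross, ← Finset.sum_comm (f := fun b f =>
    (if f b = j then (1:ℝ) else 0) *
      (((VmZ v f).det : ℝ)^2 *
        ((∏ b' ∈ Finset.univ.erase b, x (f b')) * Ψ (∑ b', v (f b')) x)))]
  rw [add_comm]
  exact hzero2

lemma hasDerivAt_GG (v : Fin n → (Fin r → ℤ)) (m0 : Fin r → ℤ)
    (hdeg : ∀ i, ∑ k, m0 k * v i k = 1)
    (Ψ : (Fin r → ℤ) → (Fin n → ℝ) → ℝ)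
    (hder : ∀ d : Fin r → ℤ, (fun k => (d k : ℝ)) ∈ intCone v →
      ∀ i : Fin n, ∀ x : Fin n → ℝ,
        HasDerivAt (fun t => Ψ d (Function.update x i t)) (Ψ (d + v i) x) (x i))
    (hEuler : ∀ d : Fin r → ℤ, (fun k => (d k : ℝ)) ∈ intCone v →
      ∀ m : Fin r → ℤ, ∀ x : Fin n → ℝ,
        (∑ i, ((∑ k, m k * v i k : ℤ) : ℝ) * x i * Ψ (d + v i) x) +
          ((∑ k, m k * d k : ℤ) : ℝ) * Ψ d x = 0)
    (j : Fin n) (x : Fin n → ℝ) :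
    HasDerivAt (fun t => GG v Ψ (Function.update x j t)) 0 (x j) := by
  have hsum : HasDerivAt (fun t => ∑ f : Fin r → Fin n,
      ((VmZ v f).det : ℝ)^2 *
        ((∏ b, Function.update x j t (f b)) * Ψ (∑ b, v (f b)) (Function.update x j t)))
      (∑ f : Fin r → Fin n, Dterm v Ψ j x f) (x j) :=
    HasDerivAt.fun_sum fun f _ => hasDerivAt_term v Ψ hder j x f
  rw [sum_Dterm v m0 hdeg Ψ hEuler j x] at hsum
  exact hsum

lemma GG_const (v : Fin n → (Fin r → ℤ)) (m0 : Fin r → ℤ)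
    (hdeg : ∀ i, ∑ k, m0 k * v i k = 1)
    (Ψ : (Fin r → ℤ) → (Fin n → ℝ) → ℝ)
    (hder : ∀ d : Fin r → ℤ, (fun k => (d k : ℝ)) ∈ intCone v →
      ∀ i : Fin n, ∀ x : Fin n → ℝ,
        HasDerivAt (fun t => Ψ d (Function.update x i t)) (Ψ (d + v i) x) (x i))
    (hEuler : ∀ d : Fin r → ℤ, (fun k => (d k : ℝ)) ∈ intCone v →
      ∀ m : Fin r → ℤ, ∀ x : Fin n → ℝ,
        (∑ i, ((∑ k, m k * v i k : ℤ) : ℝ) * x i * Ψ (d + v i) x) +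
          ((∑ k, m k * d k : ℤ) : ℝ) * Ψ d x = 0) :
    ∀ x y : Fin n → ℝ, GG v Ψ x = GG v Ψ y := by
  classical
  have key : ∀ (x : Fin n → ℝ) (j : Fin n) (t : ℝ),
      HasDerivAt (fun s => GG v Ψ (Function.update x j s)) 0 t := by
    intro x j t
    have h := hasDerivAt_GG v m0 hdeg Ψ hder hEuler j (Function.update x j t)
    simpa [Function.update_idem, Function.update_self] using h
  have hline : ∀ (x : Fin n → ℝ) (j : Fin n) (t s : ℝ),
      GG v Ψ (Function.update x j t) = GG v Ψ (Function.update x j s) := by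
    intro x j t s
    exact is_const_of_deriv_eq_zero (fun u => (key x j u).differentiableAt)
      (fun u => (key x j u).deriv) t s
  intro x y
  have hstep : ∀ s : Finset (Fin n), GG v Ψ x = GG v Ψ (s.piecewise y x) := by
    intro s
    induction s using Finset.induction_on with
    | empty => rw [Finset.piecewise_empty]
    | @insert a s ha ih =>
      rw [Finset.piecewise_insert]
      calc GG v Ψ x = GG v Ψ (s.piecewise y x) := ih
        _ = GG v Ψ (Function.update (s.piecewise y x) a ((s.piecewise y x) a)) := by
            rw [Function.update_eq_self]
        _ = GG v Ψ (Function.update (s.piecewise y x) a (y a)) := hline _ a _ _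
  have h := hstep Finset.univ
  rwa [Finset.piecewise_univ] at h

lemma image_fI (I : Finset (Fin n)) (h : I.card = r) :
    Finset.image (fun b => ((I.orderIsoOfFin h b : Fin n))) Finset.univ = I := by
  classical
  have hinj : Function.Injective (fun b => ((I.orderIsoOfFin h b : Fin n))) :=
    fun a b hab => (I.orderIsoOfFin h).injective (Subtype.coe_injective hab)
  apply Finset.eq_of_subset_of_card_le
  · intro i hi
    obtain ⟨b, _, rfl⟩ := Finset.mem_image.mp hi
    exact (I.orderIsoOfFin h b).2
  · rw [Finset.card_image_of_injective _ hinj, Finset.card_univ, Fintype.card_fin]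
    exact le_of_eq h

/-- Conversion between the function-indexed sum and the subset-indexed sum. -/
lemma GG_eq (v : Fin n → (Fin r → ℤ)) (Ψ : (Fin r → ℤ) → (Fin n → ℝ) → ℝ) (x : Fin n → ℝ) :
    GG v Ψ x = (r.factorial : ℝ) *
      ∑ I ∈ Finset.powersetCard r (Finset.univ : Finset (Fin n)),
        (if h : I.card = r then
          (Matrix.det (Matrix.of fun a b => ((v (I.orderIsoOfFin h b) : Fin r → ℤ) a : ℝ)))
              ^ 2 *
            (∏ i ∈ I, x i) * Ψ (∑ i ∈ I, v i) x
        else 0) := by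
  classical
  -- only injective functions contribute
  have hz : ∑ f ∈ Finset.univ.filter (fun f : Fin r → Fin n => ¬ Function.Injective f),
      Phi v Ψ x f = 0 := by
    refine Finset.sum_eq_zero fun f hf => ?_
    have hninj := (Finset.mem_filter.mp hf).2
    obtain ⟨a, b, hab, hne⟩ := Function.not_injective_iff.mp hninj
    have hdet : (VmZ v f).det = 0 :=
      Matrix.det_zero_of_column_eq hne (fun k => by
        show v (f a) k = v (f b) k
        rw [hab])
    rw [Phi_def, hdet]
    norm_num
  have hGG : GG v Ψ x
      = ∑ f ∈ Finset.univ.filter (fun f : Fin r → Fin n => Function.Injective f),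
          Phi v Ψ x f := by
    rw [GG_phi,
      ← Finset.sum_filter_add_sum_filter_not Finset.univ
        (fun f : Fin r → Fin n => Function.Injective f) (Phi v Ψ x),
      hz, add_zero]
  have hmaps : ∀ f ∈ Finset.univ.filter (fun f : Fin r → Fin n => Function.Injective f),
      Finset.image f Finset.univ ∈ Finset.powersetCard r (Finset.univ : Finset (Fin n)) := by
    intro f hf
    rw [Finset.mem_powersetCard]
    exact ⟨Finset.subset_univ _,
      by rw [Finset.card_image_of_injective _ ((Finset.mem_filter.mp hf).2),
          Finset.card_univ, Fintype.card_fin]⟩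
  have hfib : ∑ f ∈ Finset.univ.filter (fun f : Fin r → Fin n => Function.Injective f),
      Phi v Ψ x f
      = ∑ I ∈ Finset.powersetCard r (Finset.univ : Finset (Fin n)),
          ∑ f ∈ (Finset.univ.filter
              (fun f : Fin r → Fin n => Function.Injective f)).filter
              (fun f => Finset.image f Finset.univ = I),
            Phi v Ψ x f :=
    (Finset.sum_fiberwise_of_maps_to hmaps _).symm
  have hinner : ∀ I ∈ Finset.powersetCard r (Finset.univ : Finset (Fin n)),
      (∑ f ∈ (Finset.univ.filter
          (fun f : Fin r → Fin n => Function.Injective f)).filter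
          (fun f => Finset.image f Finset.univ = I),
        Phi v Ψ x f)
      = (r.factorial : ℝ) *
        (if h : I.card = r then
          (Matrix.det (Matrix.of fun a b => ((v (I.orderIsoOfFin h b) : Fin r → ℤ) a : ℝ)))
              ^ 2 *
            (∏ i ∈ I, x i) * Ψ (∑ i ∈ I, v i) x
        else 0) := by
    intro I hI
    have h : I.card = r := (Finset.mem_powersetCard.mp hI).2
    rw [dif_pos h]
    have hfIinj : Function.Injective (fun b => ((I.orderIsoOfFin h b : Fin n))) :=
      fun a b hab => (I.orderIsoOfFin h).injective (Subtype.coe_injective hab)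
    have himg := image_fI I h
    have hbij : ∑ f ∈ (Finset.univ.filter
          (fun f : Fin r → Fin n => Function.Injective f)).filter
          (fun f => Finset.image f Finset.univ = I),
        Phi v Ψ x f
        = ∑ σ : Equiv.Perm (Fin r), Phi v Ψ x (fun b => ((I.orderIsoOfFin h (σ b) : Fin n))) := by
      refine (Finset.sum_bij
        (fun (σ : Equiv.Perm (Fin r)) _ => (fun b => ((I.orderIsoOfFin h (σ b) : Fin n))))
        ?_ ?_ ?_ ?_).symm
      · intro σ _
        rw [Finset.mem_filter, Finset.mem_filter]
        refine ⟨⟨Finset.mem_univ _, hfIinj.comp σ.injective⟩, ?_⟩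
        have himgσ : Finset.image (fun b => ((I.orderIsoOfFin h (σ b) : Fin n))) Finset.univ
            = Finset.image (fun b => ((I.orderIsoOfFin h b : Fin n)))
                (Finset.image (⇑σ) Finset.univ) := by
          rw [Finset.image_image]; rfl
        rw [himgσ, Finset.image_univ_equiv, himg]
      · intro σ₁ _ σ₂ _ hσ
        exact Equiv.ext fun b => hfIinj (congrFun hσ b)
      · intro f hf
        rw [Finset.mem_filter, Finset.mem_filter] at hf
        obtain ⟨⟨_, hfinj⟩, hfimg⟩ := hf
        have hu : ∀ b, f b ∈ I := fun b => by
          rw [← hfimg]; exact Finset.mem_image_of_mem f (Finset.mem_univ b)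
        have hσ0inj : Function.Injective
            (fun b => (I.orderIsoOfFin h).symm ⟨f b, hu b⟩) := by
          intro a c hac
          apply hfinj
          have h2 := congrArg (I.orderIsoOfFin h) hac
          rw [OrderIso.apply_symm_apply, OrderIso.apply_symm_apply] at h2
          exact congrArg Subtype.val h2
        refine ⟨Equiv.ofBijective _ (Finite.injective_iff_bijective.mp hσ0inj),
          Finset.mem_univ _, ?_⟩
        funext b
        show ((I.orderIsoOfFin h ((I.orderIsoOfFin h).symm ⟨f b, hu b⟩) : Fin n)) = f b
        rw [OrderIso.apply_symm_apply]
      · intro σ _; rfl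
    have hperm : ∀ σ : Equiv.Perm (Fin r),
        Phi v Ψ x (fun b => ((I.orderIsoOfFin h (σ b) : Fin n)))
          = Phi v Ψ x (fun b => ((I.orderIsoOfFin h b : Fin n))) := by
      intro σ
      have hdet : VmZ v (fun b => ((I.orderIsoOfFin h (σ b) : Fin n)))
          = (VmZ v (fun b => ((I.orderIsoOfFin h b : Fin n)))).submatrix id ⇑σ := by
        ext a c; rfl
      have hsq : ((VmZ v (fun b => ((I.orderIsoOfFin h (σ b) : Fin n)))).det : ℝ)^2
          = ((VmZ v (fun b => ((I.orderIsoOfFin h b : Fin n)))).det : ℝ)^2 := by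
        rw [hdet, Matrix.det_permute']
        rcases Int.units_eq_one_or (Equiv.Perm.sign σ) with hs | hs <;>
          rw [hs] <;> push_cast <;> ring
      have hp : (∏ b, x ((I.orderIsoOfFin h (σ b) : Fin n)))
          = ∏ b, x ((I.orderIsoOfFin h b : Fin n)) :=
        Equiv.prod_comp σ (fun b => x ((I.orderIsoOfFin h b : Fin n)))
      have hq : (∑ b, v ((I.orderIsoOfFin h (σ b) : Fin n)))
          = ∑ b, v ((I.orderIsoOfFin h b : Fin n)) :=
        Equiv.sum_comp σ (fun b => v ((I.orderIsoOfFin h b : Fin n)))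
      rw [Phi_def, Phi_def, hsq, hp, hq]
    have hp2 : (∏ i ∈ I, x i) = ∏ b, x ((I.orderIsoOfFin h b : Fin n)) := by
      conv_lhs => rw [← himg]
      exact Finset.prod_image (fun a _ b _ hab => hfIinj hab)
    have hq2 : (∑ i ∈ I, v i) = ∑ b, v ((I.orderIsoOfFin h b : Fin n)) := by
      conv_lhs => rw [← himg]
      exact Finset.sum_image (fun a _ b _ hab => hfIinj hab)
    calc ∑ f ∈ (Finset.univ.filter
          (fun f : Fin r → Fin n => Function.Injective f)).filter
          (fun f => Finset.image f Finset.univ = I),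
        Phi v Ψ x f
        = ∑ σ : Equiv.Perm (Fin r),
            Phi v Ψ x (fun b => ((I.orderIsoOfFin h (σ b) : Fin n))) := hbij
      _ = ∑ _σ : Equiv.Perm (Fin r),
            Phi v Ψ x (fun b => ((I.orderIsoOfFin h b : Fin n))) :=
          Finset.sum_congr rfl fun σ _ => hperm σ
      _ = (r.factorial : ℝ) * Phi v Ψ x (fun b => ((I.orderIsoOfFin h b : Fin n))) := by
          rw [Finset.sum_const, Finset.card_univ, Fintype.card_perm, Fintype.card_fin,
            nsmul_eq_mul]
      _ = (r.factorial : ℝ) *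
          ((Matrix.det (Matrix.of fun a b => ((v (I.orderIsoOfFin h b) : Fin r → ℤ) a : ℝ)))
              ^ 2 *
            (∏ i ∈ I, x i) * Ψ (∑ i ∈ I, v i) x) := by
          rw [Phi_def, det_cast, hp2, hq2]
          have hVm : Vm v (fun b => ((I.orderIsoOfFin h b : Fin n)))
              = Matrix.of (fun a b => ((v ((I.orderIsoOfFin h b : Fin n)) a : ℝ))) := rfl
          rw [hVm]
          ring
  rw [hGG, hfib, Finset.sum_congr rfl hinner, ← Finset.mul_sum]

end Stmt10Aux

/-- for lattice points `v₁,…,v_n` on a common affine hyperplane `{deg = 1}`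
and a solution `(Ψ_d)_{d∈C°}` of the better behaved GKZ system `bbGKZ(C°,0)` (i.e.
`∂ᵢΨ_d = Ψ_{d+vᵢ}` and `∑ᵢ ⟨m,vᵢ⟩xᵢ∂ᵢΨ_d + ⟨m,d⟩Ψ_d = 0` for all `m ∈ N^∨` and all `d`
in the interior of the cone `C` generated by the `vᵢ`), the Hessian pairing
`∑_{|I|=r} Vol_I² (∏_{i∈I} xᵢ) Ψ_{∑_{i∈I} vᵢ}` is a constant function of `(x₁,…,x_n)`. -/
theorem stmt10 {n r : ℕ} (v : Fin n → (Fin r → ℤ))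
    -- the `vᵢ` lie on the hyperplane `{m₀ = 1}`
    (m0 : Fin r → ℤ) (hdeg : ∀ i, ∑ k, m0 k * v i k = 1)
    (Ψ : (Fin r → ℤ) → (Fin n → ℝ) → ℝ)
    -- `∂ᵢ Ψ_d = Ψ_{d + vᵢ}` for `d ∈ C°`
    (hder : ∀ d : Fin r → ℤ, (fun k => (d k : ℝ)) ∈ intCone v →
      ∀ i : Fin n, ∀ x : Fin n → ℝ,
        HasDerivAt (fun t => Ψ d (Function.update x i t)) (Ψ (d + v i) x) (x i))
    -- `∑ᵢ ⟨m,vᵢ⟩ xᵢ ∂ᵢΨ_d + ⟨m,d⟩ Ψ_d = 0` for `d ∈ C°`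
    (hEuler : ∀ d : Fin r → ℤ, (fun k => (d k : ℝ)) ∈ intCone v →
      ∀ m : Fin r → ℤ, ∀ x : Fin n → ℝ,
        (∑ i, ((∑ k, m k * v i k : ℤ) : ℝ) * x i * Ψ (d + v i) x) +
          ((∑ k, m k * d k : ℤ) : ℝ) * Ψ d x = 0) :
    ∀ x y : Fin n → ℝ,
      (∑ I ∈ Finset.powersetCard r (Finset.univ : Finset (Fin n)),
        if h : I.card = r then
          (Matrix.det (Matrix.of fun a b => ((v (I.orderIsoOfFin h b) : Fin r → ℤ) a : ℝ)))
              ^ 2 *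
            (∏ i ∈ I, x i) * Ψ (∑ i ∈ I, v i) x
        else 0) =
      (∑ I ∈ Finset.powersetCard r (Finset.univ : Finset (Fin n)),
        if h : I.card = r then
          (Matrix.det (Matrix.of fun a b => ((v (I.orderIsoOfFin h b) : Fin r → ℤ) a : ℝ)))
              ^ 2 *
            (∏ i ∈ I, y i) * Ψ (∑ i ∈ I, v i) y
        else 0) := by
  intro x y
  have hc := Stmt10Aux.GG_const v m0 hdeg Ψ hder hEuler x y
  have hx := Stmt10Aux.GG_eq v Ψ x
  have hy := Stmt10Aux.GG_eq v Ψ y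
  rw [hx, hy] at hc
  exact mul_left_cancel₀ (by exact_mod_cast r.factorial_ne_zero) hc
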